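/- Let τ > 0. Let f : [0,τ] → ℝ be cadlag, with f⁻(t) = lim_{s↑t} f(s) for t ∈ (0,τ] and f⁻(0) = f(0). Let λ : [0,τ] → ℝ be bounded and continuous from the left at every point of (0,τ], and let h : [0,τ] × ℝ → ℝ be bounded and satisfy: for every t₀ ∈ (0,τ] and y₀ ∈ ℝ, h(t, y) → h(t₀, y₀) whenever t ↑ t₀ and y → y₀. For K ∈ ℕ set τ_k = kτ/K. Then the Riemann-type sums Σ_{k=0}^{K−1} h(τ_k, f(τ_k)) · λ(τ_k) · (τ/K) converge, as K → ∞, to the Lebesgue integral ∫₀^τ h(t, f⁻(t)) λ(t) dt. -/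

import Mathlib

open Set Filter MeasureTheory

/-- Convergence of Riemann-type sums on the grid `τ_k = kτ/K` to the Lebesgue integral:
for `f : [0,τ] → ℝ` cadlag with left-limit function `fl` (and `fl 0 = f 0`), `λ` bounded and
left-continuous on `(0, τ]`, and `h` bounded and satisfying `h(t, y) → h(t₀, y₀)` whenever
`t ↑ t₀` and `y → y₀`, the sums `Σ_{k<K} h(τ_k, f(τ_k)) λ(τ_k) (τ/K)` converge as `K → ∞`
to `∫₀^τ h(t, f⁻(t)) λ(t) dt`. -/
theorem stmt13 (τ : ℝ) (hτ : 0 < τ) (f fl : ℝ → ℝ)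
    (hf_right : ∀ t ∈ Ico (0 : ℝ) τ, ContinuousWithinAt f (Ici t) t)
    (hfl : ∀ t ∈ Ioc (0 : ℝ) τ, Tendsto f (nhdsWithin t (Iio t)) (nhds (fl t)))
    (hfl0 : fl 0 = f 0)
    (lam : ℝ → ℝ) (c : ℝ) (hlam_bdd : ∀ t ∈ Icc (0 : ℝ) τ, |lam t| ≤ c)
    (hlam_lc : ∀ t ∈ Ioc (0 : ℝ) τ, ContinuousWithinAt lam (Iio t) t)
    (h : ℝ → ℝ → ℝ) (b : ℝ) (hh_bdd : ∀ t y : ℝ, |h t y| ≤ b)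
    (hh : ∀ t₀ ∈ Ioc (0 : ℝ) τ, ∀ y₀ : ℝ,
      Tendsto (fun p : ℝ × ℝ => h p.1 p.2)
        (nhdsWithin (t₀, y₀) (Iio t₀ ×ˢ (univ : Set ℝ))) (nhds (h t₀ y₀))) :
    Tendsto
      (fun K : ℕ => ∑ k ∈ Finset.range K,
        h ((k : ℝ) * τ / K) (f ((k : ℝ) * τ / K)) * lam ((k : ℝ) * τ / K) * (τ / K))
      atTop (nhds (∫ t in (0 : ℝ)..τ, h t (fl t) * lam t)) := by
  have hb : 0 ≤ b := (abs_nonneg _).trans (hh_bdd 0 0)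
  have hc : 0 ≤ c := (abs_nonneg _).trans (hlam_bdd 0 ⟨le_refl 0, hτ.le⟩)
  set e : ℕ → ℝ → ℝ := fun K t => ((⌈t * (K : ℝ) / τ⌉ : ℝ) - 1) * τ / (K : ℝ) with he
  set G : ℕ → ℝ → ℝ := fun K t => h (e K t) (f (e K t)) * lam (e K t) with hG
  set g : ℝ → ℝ := fun t => h t (fl t) * lam t with hg
  -- value of e on the K-grid
  have hgrid : ∀ K : ℕ, 0 < K → ∀ k : ℕ, ∀ t : ℝ,
      t ∈ Ioc ((k : ℝ) * τ / K) (((k : ℝ) + 1) * τ / K) → e K t = (k : ℝ) * τ / K := by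
    intro K hK k t ht
    have hK0 : (0 : ℝ) < K := by exact_mod_cast hK
    have hceil : ⌈t * (K : ℝ) / τ⌉ = (k : ℤ) + 1 := by
      rw [Int.ceil_eq_iff]
      constructor
      · push_cast
        have h1 : (k : ℝ) * τ < t * K := by
          have := ht.1
          rw [div_lt_iff₀ hK0] at this
          linarith
        rw [lt_div_iff₀ hτ]
        linarith
      · push_cast
        have h2 : t * K ≤ ((k : ℝ) + 1) * τ := by
          have := ht.2
          rw [le_div_iff₀ hK0] at this
          linarith
        rw [div_le_iff₀ hτ]
        linarith
    simp only [he, hceil]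
    push_cast
    ring_nf
  -- bounds for e
  have hebnd : ∀ K : ℕ, 0 < K → ∀ t : ℝ, 0 < t →
      t - τ / K ≤ e K t ∧ e K t < t ∧ 0 ≤ e K t := by
    intro K hK t ht
    have hK0 : (0 : ℝ) < K := by exact_mod_cast hK
    set x : ℝ := t * (K : ℝ) / τ with hx
    have hx0 : 0 < x := by positivity
    have hxid : x * (τ / K) = t := by
      field_simp [hx]
      rw [hx, div_mul_cancel₀ _ hτ.ne', mul_comm]
    have h1 : (1 : ℝ) ≤ (⌈x⌉ : ℝ) := by exact_mod_cast Int.ceil_pos.mpr hx0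
    have h2 : ((⌈x⌉ : ℝ) - 1) < x := by
      have := Int.ceil_lt_add_one x
      linarith
    have h3 : x ≤ (⌈x⌉ : ℝ) := Int.le_ceil x
    have hτK : 0 < τ / (K : ℝ) := by positivity
    have hform : e K t = ((⌈x⌉ : ℝ) - 1) * (τ / K) := by
      simp only [he, hx]
      ring
    refine ⟨?_, ?_, ?_⟩
    · rw [hform]
      nlinarith [mul_le_mul_of_nonneg_right (show x - 1 ≤ (⌈x⌉ : ℝ) - 1 by linarith) hτK.le]
    · rw [hform]
      nlinarith [mul_lt_mul_of_pos_right h2 hτK]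
    · rw [hform]
      have : (0:ℝ) ≤ (⌈x⌉ : ℝ) - 1 := by linarith
      exact mul_nonneg this hτK.le
  have he0 : ∀ t : ℝ, e 0 t = 0 := by
    intro t; simp [he]
  -- measurability
  have hGmeas : ∀ K, Measurable (G K) := by
    intro K
    have : G K = (fun n : ℤ =>
        h (((n : ℝ) - 1) * τ / K) (f (((n : ℝ) - 1) * τ / K)) * lam (((n : ℝ) - 1) * τ / K))
        ∘ (fun t : ℝ => ⌈t * (K : ℝ) / τ⌉) := rfl
    rw [this]
    exact (measurable_of_countable _).comp ((measurable_id.mul_const _).div_const _).ceil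
  -- bound
  have hGbdd : ∀ K : ℕ, ∀ t ∈ Ioc (0 : ℝ) τ, ‖G K t‖ ≤ b * c := by
    intro K t ht
    have hmem : e K t ∈ Icc (0 : ℝ) τ := by
      rcases Nat.eq_zero_or_pos K with hK | hK
      · rw [hK, he0]; exact ⟨le_refl 0, hτ.le⟩
      · obtain ⟨_, h2, h3⟩ := hebnd K hK t ht.1
        exact ⟨h3, (h2.le.trans ht.2)⟩
    have : ‖G K t‖ = |h (e K t) (f (e K t))| * |lam (e K t)| := by
      simp [hG, Real.norm_eq_abs, abs_mul]
    rw [this]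
    exact mul_le_mul (hh_bdd _ _) (hlam_bdd _ hmem) (abs_nonneg _) hb
  -- pointwise convergence
  have hptw : ∀ t ∈ Ioc (0 : ℝ) τ, Tendsto (fun K => G K t) atTop (nhds (g t)) := by
    intro t ht
    have hlow : Tendsto (fun K : ℕ => t - τ / K) atTop (nhds t) := by
      have h2 : Tendsto (fun K : ℕ => t - τ / K) atTop (nhds (t - 0)) :=
        Tendsto.const_sub t (tendsto_const_div_atTop_nhds_zero_nat τ)
      simpa using h2
    have het : Tendsto (fun K => e K t) atTop (nhds t) := by
      refine tendsto_of_tendsto_of_tendsto_of_le_of_le' hlow tendsto_const_nhds ?_ ?_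
      · filter_upwards [eventually_ge_atTop 1] with K hK
        exact (hebnd K hK t ht.1).1
      · filter_upwards [eventually_ge_atTop 1] with K hK
        exact (hebnd K hK t ht.1).2.1.le
    have het' : Tendsto (fun K => e K t) atTop (nhdsWithin t (Iio t)) := by
      rw [tendsto_nhdsWithin_iff]
      refine ⟨het, ?_⟩
      filter_upwards [eventually_ge_atTop 1] with K hK
      exact (hebnd K hK t ht.1).2.1
    have hft : Tendsto (fun K => f (e K t)) atTop (nhds (fl t)) := (hfl t ht).comp het'
    have hlamt : Tendsto (fun K => lam (e K t)) atTop (nhds (lam t)) := Filter.Tendsto.comp (hlam_lc t ht) het'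
    have hpair : Tendsto (fun K => (e K t, f (e K t))) atTop
        (nhdsWithin (t, fl t) (Iio t ×ˢ (univ : Set ℝ))) := by
      rw [nhdsWithin_prod_eq, nhdsWithin_univ]
      exact het'.prodMk hft
    exact ((hh t ht (fl t)).comp hpair).mul hlamt
  -- dominated convergence
  have hdct : Tendsto (fun K : ℕ => ∫ t in Ioc (0 : ℝ) τ, G K t) atTop
      (nhds (∫ t in Ioc (0 : ℝ) τ, g t)) := by
    refine tendsto_integral_of_dominated_convergence (fun _ => b * c)
      (fun K => (hGmeas K).aestronglyMeasurable) (integrable_const _) ?_ ?_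
    · intro K
      exact (ae_restrict_iff' measurableSet_Ioc).2 (ae_of_all _ fun t ht => hGbdd K t ht)
    · exact (ae_restrict_iff' measurableSet_Ioc).2 (ae_of_all _ hptw)
  -- identification of the sums with the integrals of G K
  have key : ∀ K : ℕ, 1 ≤ K →
      (∑ k ∈ Finset.range K,
        h ((k : ℝ) * τ / K) (f ((k : ℝ) * τ / K)) * lam ((k : ℝ) * τ / K) * (τ / K))
      = ∫ t in Ioc (0 : ℝ) τ, G K t := by
    intro K hK
    have hK0 : (0 : ℝ) < K := by exact_mod_cast hK
    set S : ℕ → Set ℝ := fun k => Ioc ((k : ℝ) * τ / K) (((k : ℝ) + 1) * τ / K) with hS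
    set a : ℕ → ℝ := fun k =>
      h ((k : ℝ) * τ / K) (f ((k : ℝ) * τ / K)) * lam ((k : ℝ) * τ / K) with ha
    have hGk : ∀ k : ℕ, ∀ t ∈ S k, G K t = a k := by
      intro k t ht
      simp only [hG, ha, hgrid K (by omega) k t ht]
    have hcover : Ioc (0 : ℝ) τ = ⋃ k ∈ Finset.range K, S k := by
      ext x
      simp only [mem_Ioc, mem_iUnion, Finset.mem_range, hS, exists_prop]
      constructor
      · rintro ⟨hx0, hxτ⟩
        set n := ⌈x * (K : ℝ) / τ⌉ with hn
        have hn1 : 1 ≤ n := Int.ceil_pos.mpr (by positivity)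
        have hnK : n ≤ (K : ℤ) := by
          apply Int.ceil_le.mpr
          push_cast
          rw [div_le_iff₀ hτ]
          nlinarith
        refine ⟨(n - 1).toNat, by omega, ?_, ?_⟩
        · have hcast : (((n - 1).toNat : ℝ)) = (n : ℝ) - 1 := by
            have : (((n - 1).toNat : ℤ)) = n - 1 := Int.toNat_of_nonneg (by omega)
            exact_mod_cast this
          rw [hcast, div_lt_iff₀ hK0]
          have h2 : (n : ℝ) - 1 < x * K / τ := by
            have := Int.ceil_lt_add_one (x * (K : ℝ) / τ)
            rw [← hn] at this
            linarith
          rw [lt_div_iff₀ hτ] at h2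
          linarith
        · have hcast : (((n - 1).toNat : ℝ)) = (n : ℝ) - 1 := by
            have : (((n - 1).toNat : ℤ)) = n - 1 := Int.toNat_of_nonneg (by omega)
            exact_mod_cast this
          rw [hcast]
          have h3 : x * K / τ ≤ (n : ℝ) := by
            rw [hn]; exact Int.le_ceil _
          rw [div_le_iff₀ hτ] at h3
          rw [le_div_iff₀ hK0]
          linarith
      · rintro ⟨k, hk, hx1, hx2⟩
        constructor
        · exact lt_of_le_of_lt (by positivity) hx1
        · refine hx2.trans ?_
          rw [div_le_iff₀ hK0]
          have : (k : ℝ) + 1 ≤ (K : ℝ) := by exact_mod_cast hk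
          nlinarith
    have hmeasS : ∀ k ∈ Finset.range K, MeasurableSet (S k) := fun k _ => measurableSet_Ioc
    have hdisj : Set.Pairwise (↑(Finset.range K)) (Function.onFun Disjoint S) := by
      intro i _ j _ hij
      simp only [Function.onFun, hS]
      rw [Set.Ioc_disjoint_Ioc]
      rcases lt_or_gt_of_ne hij with hlt | hlt
      · apply min_le_of_left_le
        apply le_max_of_le_right
        have : (i : ℝ) + 1 ≤ (j : ℝ) := by exact_mod_cast hlt
        gcongr
      · apply min_le_of_right_le
        apply le_max_of_le_left
        have : (j : ℝ) + 1 ≤ (i : ℝ) := by exact_mod_cast hlt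
        gcongr
    have hintS : ∀ k ∈ Finset.range K, IntegrableOn (G K) (S k) := by
      intro k _
      have hconst : IntegrableOn (fun _ : ℝ => a k) (S k) volume :=
        integrableOn_const measure_Ioc_lt_top.ne
      exact hconst.congr ((ae_restrict_iff' measurableSet_Ioc).2
        (ae_of_all _ fun t ht => (hGk k t ht).symm))
    have hvol : ∀ k : ℕ, (volume (S k)).toReal = τ / K := by
      intro k
      simp only [hS, Real.volume_Ioc]
      rw [show ((k : ℝ) + 1) * τ / K - (k : ℝ) * τ / K = τ / K by ring,
        ENNReal.toReal_ofReal (by positivity : (0:ℝ) ≤ τ / K)]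
    rw [hcover, integral_biUnion_finset _ hmeasS hdisj hintS]
    refine Finset.sum_congr rfl fun k _ => ?_
    rw [setIntegral_congr_fun measurableSet_Ioc (fun t ht => hGk k t ht),
      setIntegral_const, measureReal_def, hvol k, smul_eq_mul, mul_comm]
  -- conclude
  rw [intervalIntegral.integral_of_le hτ.le]
  refine hdct.congr' ?_
  filter_upwards [eventually_ge_atTop 1] with K hK
  exact (key K hK).symm
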